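/- Let a = λSI/N + (μ+γ)I + 2μS, b = −λSI/N − γI, c = λSI/N + (μ+γ)I with S, I ≥ 0, N = S + I > 0, and λ, μ, γ ≥ 0. Then the 2×2 symmetric matrix V = [[a, b], [b, c]] is positive semidefinite, i.e. a ≥ 0, c ≥ 0 and ac − b² ≥ 0. -/

import Mathlib

theorem sis_covariance_posSemidef (S I N lam μ γ a b c : ℝ)
    (hS : 0 ≤ S) (hI : 0 ≤ I) (hN : N = S + I) (hNpos : 0 < N)
    (hlam : 0 ≤ lam) (hμ : 0 ≤ μ) (hγ : 0 ≤ γ)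
    (ha : a = lam * S * I / N + (μ + γ) * I + 2 * μ * S)
    (hb : b = -(lam * S * I / N) - γ * I)
    (hc : c = lam * S * I / N + (μ + γ) * I) :
    Matrix.PosSemidef !![a, b; b, c] ∧ 0 ≤ a ∧ 0 ≤ c ∧ 0 ≤ a * c - b ^ 2 := by
  have hp : 0 ≤ lam * S * I / N := by positivity
  have ha' : 0 ≤ a := by rw [ha]; positivity
  have hc' : 0 ≤ c := by rw [hc]; positivity
  have hdet : 0 ≤ a * c - b ^ 2 := by
    subst ha hb hc
    nlinarith [mul_nonneg hμ hI, mul_nonneg hμ hS, mul_nonneg hγ hI,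
      mul_nonneg (mul_nonneg hμ hI) hp, mul_nonneg (mul_nonneg hγ hI) hp]
  refine ⟨⟨?_, ?_⟩, ha', hc', hdet⟩
  · ext i j
    fin_cases i <;> fin_cases j <;>
      simp [Matrix.conjTranspose, Matrix.vecHead, Matrix.vecTail]
  · intro x
    simp (disch := simp) only [Finsupp.sum_fintype]
    simp only [Matrix.mulVec, dotProduct, Fin.sum_univ_two, Matrix.cons_val',
      Matrix.cons_val_zero, Matrix.cons_val_one, Matrix.head_cons, Matrix.empty_val',
      Matrix.cons_val_fin_one, Matrix.head_fin_const, Pi.star_apply, star_trivial,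
      Matrix.of_apply, Matrix.vecHead, Matrix.vecTail]
    rcases ha'.eq_or_lt with h0 | hpos
    · have hb0 : b = 0 := by nlinarith [sq_nonneg b]
      have := mul_nonneg hc' (sq_nonneg (x 1))
      rw [← h0, hb0]
      nlinarith
    · have key : 0 ≤ (a * x 0 + b * x 1) ^ 2 + (a * c - b ^ 2) * x 1 ^ 2 := by
        have := mul_nonneg hdet (sq_nonneg (x 1))
        nlinarith [sq_nonneg (a * x 0 + b * x 1)]
      have : 0 ≤ a * (x 0 * (a * x 0 + b * x 1) + x 1 * (b * x 0 + c * x 1)) := by nlinarith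
      exact nonneg_of_mul_nonneg_right (by linarith) hpos
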